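/- For real numbers a_1,...,a_N and b_1,...,b_N with a = \sum a_i and b = \sum b_i, one has (a^4 + b^2)^{1/4} \le \sum_i (a_i^4 + b_i^2)^{1/4}. -/

import Mathlib

open Finset

lemma pow4_eq (x y : ℝ) : (((x:ℝ)^4 + y^2) ^ ((1:ℝ)/4)) ^ (4:ℕ) = x^4 + y^2 := by
  rw [← Real.rpow_natCast (((x:ℝ)^4 + y^2) ^ ((1:ℝ)/4)) 4, ← Real.rpow_mul (by positivity)]
  norm_num

lemma sq_eq_sqrt (x y : ℝ) : (((x:ℝ)^4 + y^2) ^ ((1:ℝ)/4)) ^ (2:ℕ) = Real.sqrt (x^4 + y^2) := by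
  rw [← Real.rpow_natCast (((x:ℝ)^4 + y^2) ^ ((1:ℝ)/4)) 2, ← Real.rpow_mul (by positivity),
    Real.sqrt_eq_rpow]
  norm_num

lemma abs_le_f (x y : ℝ) : |x| ≤ ((x:ℝ)^4 + y^2) ^ ((1:ℝ)/4) := by
  have hf : (0:ℝ) ≤ ((x:ℝ)^4 + y^2) ^ ((1:ℝ)/4) := Real.rpow_nonneg (by positivity) _
  have h4 : |x| ^ (4:ℕ) ≤ (((x:ℝ)^4 + y^2) ^ ((1:ℝ)/4)) ^ (4:ℕ) := by
    rw [pow4_eq]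
    have : |x| ^ (4:ℕ) = x ^ 4 := by
      rw [← abs_pow]; exact abs_of_nonneg (by positivity)
    nlinarith [sq_nonneg y]
  exact le_of_pow_le_pow_left₀ (by norm_num) hf h4

lemma two_subadd (x1 y1 x2 y2 : ℝ) :
    ((x1 + x2)^4 + (y1 + y2)^2) ^ ((1:ℝ)/4) ≤
      (x1^4 + y1^2) ^ ((1:ℝ)/4) + (x2^4 + y2^2) ^ ((1:ℝ)/4) := by
  set f1 := (x1^4 + y1^2) ^ ((1:ℝ)/4) with hf1d
  set f2 := (x2^4 + y2^2) ^ ((1:ℝ)/4) with hf2d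
  set fs := ((x1 + x2)^4 + (y1 + y2)^2) ^ ((1:ℝ)/4) with hfsd
  have hf1 : (0:ℝ) ≤ f1 := Real.rpow_nonneg (by positivity) _
  have hf2 : (0:ℝ) ≤ f2 := Real.rpow_nonneg (by positivity) _
  have hfs : (0:ℝ) ≤ fs := Real.rpow_nonneg (by positivity) _
  -- squares
  have hs1 : f1 ^ (2:ℕ) = Real.sqrt (x1^4 + y1^2) := sq_eq_sqrt x1 y1
  have hs2 : f2 ^ (2:ℕ) = Real.sqrt (x2^4 + y2^2) := sq_eq_sqrt x2 y2
  have hss : fs ^ (2:ℕ) = Real.sqrt ((x1+x2)^4 + (y1+y2)^2) := sq_eq_sqrt (x1+x2) (y1+y2)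
  -- complex triangle inequality
  set z1 : ℂ := ⟨x1^2, y1⟩
  set z2 : ℂ := ⟨x2^2, y2⟩
  set c := 2 * |x1| * |x2| with hcd
  set z3 : ℂ := ⟨c, 0⟩
  have habs1 : ‖z1‖ = Real.sqrt (x1^4 + y1^2) := by
    rw [Complex.norm_def, Complex.normSq_mk]; ring_nf
  have habs2 : ‖z2‖ = Real.sqrt (x2^4 + y2^2) := by
    rw [Complex.norm_def, Complex.normSq_mk]; ring_nf
  have habs3 : ‖z3‖ = c := by
    rw [Complex.norm_def, Complex.normSq_mk]
    rw [mul_zero, add_zero, Real.sqrt_mul_self (by positivity)]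
  have htri : ‖z1 + z2 + z3‖ ≤ ‖z1‖ + ‖z2‖ + ‖z3‖ :=
    le_trans (norm_add_le _ _) (add_le_add_left (norm_add_le _ _) _)
  have hsum : z1 + z2 + z3 = ⟨x1^2 + x2^2 + c, y1 + y2⟩ := by
    simp [z1, z2, z3, Complex.ext_iff]
  have hle : fs ^ (2:ℕ) ≤ ‖z1 + z2 + z3‖ := by
    rw [hss, hsum, Complex.norm_def, Complex.normSq_mk]
    apply Real.sqrt_le_sqrt
    have h1 : (x1 + x2)^2 ≤ x1^2 + x2^2 + c := by
      rw [hcd]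
      nlinarith [abs_mul x1 x2, le_abs_self (x1*x2), abs_mul_abs_self x1, abs_mul_abs_self x2]
    have h0 : (0:ℝ) ≤ (x1 + x2)^2 := sq_nonneg _
    have h2 : ((x1+x2)^2)^2 ≤ (x1^2+x2^2+c)^2 := pow_le_pow_left₀ h0 h1 2
    have h3 : (x1+x2)^4 = ((x1+x2)^2)^2 := by ring
    linarith
  have hfin : fs ^ (2:ℕ) ≤ (f1 + f2) ^ (2:ℕ) := by
    have h1 : |x1| ≤ f1 := abs_le_f x1 y1
    have h2 : |x2| ≤ f2 := abs_le_f x2 y2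
    have := htri
    rw [habs1, habs2, habs3, ← hs1, ← hs2] at this
    have h3 : fs ^ (2:ℕ) ≤ f1^(2:ℕ) + f2^(2:ℕ) + c := le_trans hle this
    have h4 : c ≤ 2*f1*f2 := by
      have hm := mul_le_mul h1 h2 (abs_nonneg x2) hf1
      rw [hcd]; linarith
    have h5 : (f1 + f2)^(2:ℕ) = f1^(2:ℕ) + f2^(2:ℕ) + 2*f1*f2 := by ring
    linarith
  exact le_of_pow_le_pow_left₀ (by norm_num) (by positivity) hfin

theorem subadd_fourth_root (N : ℕ) (a b : Fin N → ℝ) :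
    ((∑ i, a i) ^ 4 + (∑ i, b i) ^ 2) ^ ((1 : ℝ) / 4) ≤
      ∑ i, ((a i) ^ 4 + (b i) ^ 2) ^ ((1 : ℝ) / 4) := by
  have key : ∀ s : Finset (Fin N),
      ((∑ i ∈ s, a i) ^ 4 + (∑ i ∈ s, b i) ^ 2) ^ ((1 : ℝ) / 4) ≤
        ∑ i ∈ s, ((a i) ^ 4 + (b i) ^ 2) ^ ((1 : ℝ) / 4) := by
    intro s
    induction s using Finset.induction_on with
    | empty => simp [Real.zero_rpow (by norm_num : (1:ℝ)/4 ≠ 0)]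
    | insert _ _ hx ih =>
      rename_i j t
      rw [Finset.sum_insert hx, Finset.sum_insert hx, Finset.sum_insert hx]
      exact le_trans (two_subadd _ _ _ _) (add_le_add_right ih _)
  exact key Finset.univ
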